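/- Let Γ be a real M×K matrix such that Γᵀ·Γ is invertible, let Λ, Λ̂, A be real K×K matrices, and let Ĝ be a real M×K matrix. Then ‖Λ − Λ̂‖_F ≤ ‖(ΓᵀΓ)⁻¹Γᵀ‖_F · ‖Γ·Λ − Ĝ·Λ̂‖_F + ‖Λ̂‖_F · ( ‖(ΓᵀΓ)⁻¹Γᵀ‖_F · ‖Ĝ − Γ·A‖_F + ‖A − I_K‖_F ). -/
import Mathlib


open Matrix Finset

/-- The Frobenius norm of a real matrix. -/
noncomputable def frobeniusNorm' {m n : Type*} [Fintype m] [Fintype n]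
    (A : Matrix m n ℝ) : ℝ :=
  Real.sqrt (∑ i, ∑ j, (A i j) ^ 2)

attribute [local instance] Matrix.frobeniusSeminormedAddCommGroup

lemma frobeniusNorm'_eq {m n : Type*} [Fintype m] [Fintype n]
    (A : Matrix m n ℝ) : frobeniusNorm' A = ‖A‖ := by
  have h2 : ∀ x : ℝ, ‖x‖ ^ (2:ℝ) = x ^ 2 := fun x => by
    rw [show (2:ℝ) = ((2:ℕ):ℝ) by norm_num, Real.rpow_natCast, Real.norm_eq_abs, sq_abs]
  rw [Matrix.frobenius_norm_def, frobeniusNorm', Real.sqrt_eq_rpow]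
  simp_rw [h2]

lemma frob_mul_le {l m n : Type*} [Fintype l] [Fintype m] [Fintype n]
    (A : Matrix l m ℝ) (B : Matrix m n ℝ) : ‖A * B‖ ≤ ‖A‖ * ‖B‖ := by
  exact_mod_cast Matrix.frobenius_nnnorm_mul A B

/-- the final deterministic inequality (Step 5) in the consistency
proof, bounding `‖Λ − Λ̂‖_F` by the closeness of the factor products, of `Ĝ` to
`Γ·A`, and of `A` to the identity. -/
theorem nmf_step5_bound
    (M K : ℕ) (hM : 0 < M) (hK : 0 < K)
    (Γ Ghat : Matrix (Fin M) (Fin K) ℝ)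
    (Λ Λhat A : Matrix (Fin K) (Fin K) ℝ)
    (hΓ : IsUnit (Γᵀ * Γ)) :
    frobeniusNorm' (Λ - Λhat)
      ≤ frobeniusNorm' ((Γᵀ * Γ)⁻¹ * Γᵀ) * frobeniusNorm' (Γ * Λ - Ghat * Λhat)
        + frobeniusNorm' Λhat
          * (frobeniusNorm' ((Γᵀ * Γ)⁻¹ * Γᵀ) * frobeniusNorm' (Ghat - Γ * A)
              + frobeniusNorm' (A - 1)) := by
  simp only [frobeniusNorm'_eq]
  set P := (Γᵀ * Γ)⁻¹ * Γᵀ with hP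
  have hPΓ : P * Γ = 1 := by
    rw [hP, Matrix.mul_assoc, Matrix.nonsing_inv_mul _ ((Matrix.isUnit_iff_isUnit_det _).mp hΓ)]
  have key : Λ - Λhat = P * (Γ * Λ - Ghat * Λhat) + P * (Ghat - Γ * A) * Λhat
      + (A - 1) * Λhat := by
    simp only [Matrix.mul_sub, Matrix.sub_mul, ← Matrix.mul_assoc, hPΓ,
      Matrix.one_mul, Matrix.mul_one]
    abel
  calc ‖Λ - Λhat‖ = ‖P * (Γ * Λ - Ghat * Λhat) + P * (Ghat - Γ * A) * Λhat
      + (A - 1) * Λhat‖ := by rw [← key]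
    _ ≤ ‖P * (Γ * Λ - Ghat * Λhat)‖ + ‖P * (Ghat - Γ * A) * Λhat‖
        + ‖(A - 1) * Λhat‖ := norm_add₃_le
    _ ≤ ‖P‖ * ‖Γ * Λ - Ghat * Λhat‖ + ‖P‖ * ‖Ghat - Γ * A‖ * ‖Λhat‖
        + ‖A - 1‖ * ‖Λhat‖ := by
        gcongr
        · exact frob_mul_le _ _
        · exact le_trans (frob_mul_le _ _)
            (mul_le_mul_of_nonneg_right (frob_mul_le _ _) (norm_nonneg _))
        · exact frob_mul_le _ _
    _ = ‖P‖ * ‖Γ * Λ - Ghat * Λhat‖ + ‖Λhat‖ * (‖P‖ * ‖Ghat - Γ * A‖ + ‖A - 1‖) := by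
        ring
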